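/- Let c > 0, and let ζ⁽⁰⁾, ζ⁽¹⁾, ζ⁽²⁾ be nonzero vectors in the light cone L_c. If ζ⁽⁰⁾, ζ⁽¹⁾, ζ⁽²⁾ are linearly dependent over ℝ, then at least two of the three vectors are linearly dependent (i.e., one can not choose three vectors on the same light cone L_c that are linearly dependent but pairwise linearly independent). -/

import Mathlib

/-- The light cone `L_c` in `ℝ × EuclideanSpace ℝ (Fin 3)` for wave speed `c`. -/
def lightCone (c : ℝ) : Set (ℝ × EuclideanSpace ℝ (Fin 3)) :=
  {ζ | ζ.1 ^ 2 = c ^ 2 * ‖ζ.2‖ ^ 2}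

lemma lightCone_smul {c s : ℝ} {ζ : ℝ × EuclideanSpace ℝ (Fin 3)}
    (h : ζ ∈ lightCone c) : s • ζ ∈ lightCone c := by
  simp only [lightCone, Set.mem_setOf_eq] at h ⊢
  have : ‖(s • ζ).2‖ = |s| * ‖ζ.2‖ := by
    simp [Prod.smul_snd, norm_smul, Real.norm_eq_abs]
  rw [this]
  have : (s • ζ).1 = s * ζ.1 := rfl
  rw [this]
  ring_nf
  nlinarith [sq_abs s, h]

lemma key_dep (c : ℝ) (hc : 0 < c) (x y : ℝ × EuclideanSpace ℝ (Fin 3))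
    (hx : x ≠ 0) (hy : y ≠ 0) (hcx : x ∈ lightCone c) (hcy : y ∈ lightCone c)
    (α β : ℝ) (hα : α ≠ 0) (hβ : β ≠ 0) (hz : α • x + β • y ∈ lightCone c) :
    ∃ r : ℝ, y = r • x := by
  simp only [lightCone, Set.mem_setOf_eq] at hcx hcy hz
  have hz1 : (α • x + β • y).1 = α * x.1 + β * y.1 := rfl
  have hz2 : (α • x + β • y).2 = α • x.2 + β • y.2 := rfl
  rw [hz1, hz2, norm_add_sq_real] at hz
  rw [norm_smul, norm_smul] at hz
  rw [real_inner_smul_left, real_inner_smul_right] at hz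
  simp only [Real.norm_eq_abs] at hz
  have hab : ∀ s : ℝ, (|s| * ‖(x:ℝ × EuclideanSpace ℝ (Fin 3)).2‖) ^ 2 = s ^2 * ‖x.2‖^2 := by
    intro s; rw [mul_pow, sq_abs]
  -- key identity: x.1 * y.1 = c^2 * ⟪x.2, y.2⟫
  have hkey : x.1 * y.1 = c ^ 2 * inner ℝ x.2 y.2 := by
    have h1 : (|α| * ‖x.2‖) ^ 2 = α ^ 2 * ‖x.2‖ ^ 2 := by rw [mul_pow, sq_abs]
    have h2 : (|β| * ‖y.2‖) ^ 2 = β ^ 2 * ‖y.2‖ ^ 2 := by rw [mul_pow, sq_abs]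
    rw [h1, h2] at hz
    have h3 : (2*α*β) * (x.1 * y.1) = (2*α*β) * (c ^ 2 * inner ℝ x.2 y.2) := by
      linear_combination hz - α ^ 2 * hcx - β ^ 2 * hcy
    exact mul_left_cancel₀ (by simp [hα, hβ]) h3
  -- x.2 ≠ 0
  have hx2 : x.2 ≠ 0 := by
    intro h
    apply hx
    have : x.1 = 0 := by
      rw [h] at hcx; simp at hcx; nlinarith [hcx]
    exact Prod.ext this h
  have hy2 : y.2 ≠ 0 := by
    intro h
    apply hy
    have : y.1 = 0 := by
      rw [h] at hcy; simp at hcy; nlinarith [hcy]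
    exact Prod.ext this h
  have hnx : (0:ℝ) < ‖x.2‖ := norm_pos_iff.mpr hx2
  have hny : (0:ℝ) < ‖y.2‖ := norm_pos_iff.mpr hy2
  -- Cauchy-Schwarz equality
  have hcs : (inner ℝ x.2 y.2 : ℝ) ^ 2 = (‖x.2‖ * ‖y.2‖) ^ 2 := by
    have h4 : c ^ 4 * (inner ℝ x.2 y.2 : ℝ) ^ 2 = c ^ 4 * (‖x.2‖ * ‖y.2‖) ^ 2 := by
      linear_combination (-(x.1 * y.1 + c ^ 2 * (inner ℝ x.2 y.2 : ℝ))) * hkey +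
        y.1 ^ 2 * hcx + c ^ 2 * ‖x.2‖ ^ 2 * hcy
    exact mul_left_cancel₀ (by positivity) h4
  -- so x.2, y.2 are parallel
  have hpar : ∃ t : ℝ, y.2 = t • x.2 := by
    rcases sq_eq_sq_iff_eq_or_eq_neg.mp hcs with h | h
    · refine ⟨‖x.2‖⁻¹ * ‖y.2‖, ?_⟩
      have h5 : ‖y.2‖ • x.2 = ‖x.2‖ • y.2 := inner_eq_norm_mul_iff_real.mp h
      rw [mul_smul]
      exact ((inv_smul_eq_iff₀ (ne_of_gt hnx)).mpr h5).symm
    · refine ⟨-(‖x.2‖⁻¹ * ‖y.2‖), ?_⟩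
      have h6 : (inner ℝ x.2 (-y.2) : ℝ) = ‖x.2‖ * ‖(-y.2 : EuclideanSpace ℝ (Fin 3))‖ := by
        rw [inner_neg_right, norm_neg, h]; ring
      have h5 : ‖(-y.2 : EuclideanSpace ℝ (Fin 3))‖ • x.2 = ‖x.2‖ • (-y.2) :=
        inner_eq_norm_mul_iff_real.mp h6
      rw [norm_neg] at h5
      have h7 : -y.2 = (‖x.2‖⁻¹ * ‖y.2‖) • x.2 := by
        rw [mul_smul]
        exact ((inv_smul_eq_iff₀ (ne_of_gt hnx)).mpr h5).symm
      rw [neg_smul, ← h7, neg_neg]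
  obtain ⟨t, ht⟩ := hpar
  have hx1 : x.1 ≠ 0 := by
    intro h
    have hpos : (0:ℝ) < c ^ 2 * ‖x.2‖ ^ 2 := by positivity
    rw [h, zero_pow two_ne_zero] at hcx
    linarith [hcx, hpos]
  have h8 : x.1 * y.1 = x.1 * (t * x.1) := by
    rw [hkey, ht, real_inner_smul_right, real_inner_self_eq_norm_sq]
    linear_combination (-t) * hcx
  have hy1 : y.1 = t * x.1 := mul_left_cancel₀ hx1 h8
  exact ⟨t, Prod.ext hy1 ht⟩

theorem stmt_2 (c : ℝ) (hc : 0 < c) (ζ0 ζ1 ζ2 : ℝ × EuclideanSpace ℝ (Fin 3))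
    (h0 : ζ0 ≠ 0) (h1 : ζ1 ≠ 0) (h2 : ζ2 ≠ 0)
    (hc0 : ζ0 ∈ lightCone c) (hc1 : ζ1 ∈ lightCone c) (hc2 : ζ2 ∈ lightCone c)
    (hdep : ¬ LinearIndependent ℝ ![ζ0, ζ1, ζ2]) :
    ¬ LinearIndependent ℝ ![ζ0, ζ1] ∨ ¬ LinearIndependent ℝ ![ζ0, ζ2] ∨
      ¬ LinearIndependent ℝ ![ζ1, ζ2] := by
  by_contra hcon
  push_neg at hcon
  obtain ⟨hi01, hi02, hi12⟩ := hcon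
  rw [Fintype.not_linearIndependent_iff] at hdep
  obtain ⟨g, hsum, i, hi⟩ := hdep
  rw [Fin.sum_univ_three] at hsum
  simp only [Matrix.cons_val_zero, Matrix.cons_val_one, Matrix.head_cons,
    Matrix.cons_val_two, Matrix.tail_cons] at hsum
  have hg0 : g 0 ≠ 0 := by
    intro h
    rw [h, zero_smul, zero_add] at hsum
    obtain ⟨e1, e2⟩ := (LinearIndependent.pair_iff.mp hi12) _ _ hsum
    fin_cases i <;> simp_all
  have hg1 : g 1 ≠ 0 := by
    intro h
    rw [h, zero_smul, add_zero] at hsum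
    obtain ⟨e1, e2⟩ := (LinearIndependent.pair_iff.mp hi02) _ _ hsum
    fin_cases i <;> simp_all
  have hmem : g 0 • ζ0 + g 1 • ζ1 ∈ lightCone c := by
    have : g 0 • ζ0 + g 1 • ζ1 = (-(g 2)) • ζ2 := by
      rw [neg_smul]; linear_combination (norm := module) hsum
    rw [this]
    exact lightCone_smul hc2
  obtain ⟨r, hr⟩ := key_dep c hc ζ0 ζ1 h0 h1 hc0 hc1 (g 0) (g 1) hg0 hg1 hmem
  have : r • ζ0 + (-1 : ℝ) • ζ1 = 0 := by rw [hr]; module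
  obtain ⟨-, e⟩ := (LinearIndependent.pair_iff.mp hi01) _ _ this
  norm_num at e
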